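/- arXiv:2110.05778 — 3 statements merged into one kernel-verified Lean document; each statement's English description precedes it below -/
import Mathlib

section
/- Assume the kernel K* := K − α_{ν*}^{-1} is considered, where e_{ν*} = 1 is the constant function and the Fourier weights satisfy inf α_ν > 0 and the pointwise summability condition. Then every f in the RKHS H(K*) has ∫_E f dρ = 0, and H(1) ∩ H(K*) = {0}. -/
open MeasureTheory

private lemma Lp_coeFn_finset_sum {E : Type*} [MeasurableSpace E] {ρ : Measure E}
    (s : Finset ℕ) (F : ℕ → Lp ℝ 2 ρ) :
    (↑↑(∑ ν ∈ s, F ν) : E → ℝ) =ᵐ[ρ] fun x => ∑ ν ∈ s, F ν x := by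
  classical
  induction s using Finset.induction_on with
  | empty => simpa [Pi.zero_def] using (Lp.coeFn_zero (E := ℝ) (p := 2) (μ := ρ))
  | @insert a s hn ih =>
    rw [Finset.sum_insert hn]
    filter_upwards [Lp.coeFn_add (F a) (∑ ν ∈ s, F ν), ih] with x hx hx'
    rw [hx, Pi.add_apply, hx', Finset.sum_insert hn]

theorem integral_zero_on_Hstar
    {E : Type*} [MeasurableSpace E] (ρ : Measure E) [IsProbabilityMeasure ρ]
    (e : ℕ → E → ℝ) (he : ∀ ν, MemLp (e ν) 2 ρ)
    (horth : Orthonormal ℝ fun ν => (he ν).toLp (e ν))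
    (hbasis : (Submodule.span ℝ
      (Set.range fun ν => (he ν).toLp (e ν))).topologicalClosure = ⊤)
    (νstar : ℕ) (hstar : e νstar = fun _ => 1)
    (α : ℕ → ℝ) (hα : ∀ ν, 0 < α ν)
    (hinf : ∃ ε > 0, ∀ ν, ε ≤ α ν)
    (hpt : ∀ x : E, Summable fun ν => (α ν)⁻¹ * (e ν x) ^ 2)
    -- `HKstar` is the RKHS of the kernel `K* = K - α_{ν*}⁻¹`, described via
    -- its characterization as a subspace of `L²(ρ)`:
    (HKstar : Set (E → ℝ))
    (hHKstar : HKstar = {f : E → ℝ | ∃ c : ℕ → ℝ, c νstar = 0 ∧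
      (Summable fun ν => α ν * (c ν) ^ 2) ∧
      ∀ x : E, HasSum (fun ν => c ν * e ν x) (f x)}) :
    (∀ f ∈ HKstar, ∫ x, f x ∂ρ = 0) ∧
      ∀ f ∈ HKstar, (∃ a : ℝ, ∀ x, f x = a) → ∀ x, f x = 0 := by
  obtain ⟨ε, hε, hεα⟩ := hinf
  have key : ∀ f ∈ HKstar, ∫ x, f x ∂ρ = 0 := by
    intro f hf
    rw [hHKstar] at hf
    obtain ⟨c, hc0, hcsum, hcpt⟩ := hf
    -- c is square-summable
    have hc2 : Summable fun ν => (c ν) ^ 2 := by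
      refine Summable.of_nonneg_of_le (fun ν => sq_nonneg _) (fun ν => ?_)
        (hcsum.mul_left ε⁻¹)
      have h1 : 1 ≤ ε⁻¹ * α ν := by
        rw [← one_div, div_mul_eq_mul_div, le_div_iff₀ hε]
        linarith [hεα ν]
      calc (c ν) ^ 2 ≤ (ε⁻¹ * α ν) * (c ν) ^ 2 :=
            le_mul_of_one_le_left (sq_nonneg _) h1
        _ = ε⁻¹ * (α ν * (c ν) ^ 2) := by ring
    have hmem : Memℓp c 2 := by
      apply memℓp_gen
      have h2 : ∀ ν, ‖c ν‖ ^ ENNReal.toReal 2 = (c ν) ^ 2 := by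
        intro ν
        rw [ENNReal.toReal_ofNat, Real.norm_eq_abs, Real.rpow_two, sq_abs]
      simpa [h2] using hc2
    let b : HilbertBasis ℕ ℝ (Lp ℝ 2 ρ) := HilbertBasis.mk horth (by rw [hbasis])
    have hb : ∀ ν, (b ν : E → ℝ) =ᵐ[ρ] e ν := by
      intro ν
      have hbv : b ν = (he ν).toLp (e ν) :=
        congrFun (HilbertBasis.coe_mk horth (by rw [hbasis])) ν
      rw [hbv]
      exact (he ν).coeFn_toLp
    let cl : lp (fun _ : ℕ => ℝ) 2 := ⟨c, hmem⟩
    set g : Lp ℝ 2 ρ := b.repr.symm cl with hg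
    have hsum : HasSum (fun ν => c ν • b ν) g := b.hasSum_repr_symm cl
    have htend : Filter.Tendsto (fun n => ∑ ν ∈ Finset.range n, c ν • b ν)
        Filter.atTop (nhds g) := hsum.tendsto_sum_nat
    have htm : TendstoInMeasure ρ
        (fun n => ((∑ ν ∈ Finset.range n, c ν • b ν : Lp ℝ 2 ρ) : E → ℝ))
        Filter.atTop g := tendstoInMeasure_of_tendsto_Lp htend
    obtain ⟨ns, hns, hae⟩ := htm.exists_seq_tendsto_ae
    -- identify coercions a.e.
    have hcoe : ∀ᵐ x ∂ρ, ∀ n : ℕ,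
        ((∑ ν ∈ Finset.range n, c ν • b ν : Lp ℝ 2 ρ) : E → ℝ) x
          = ∑ ν ∈ Finset.range n, c ν * e ν x := by
      rw [ae_all_iff]
      intro n
      have h1 := Lp_coeFn_finset_sum (Finset.range n) (fun ν => c ν • b ν)
      have h2 : ∀ᵐ x ∂ρ, ∀ ν, (b ν : E → ℝ) x = e ν x := ae_all_iff.2 hb
      have h3 : ∀ᵐ x ∂ρ, ∀ ν : ℕ,
          ((c ν • b ν : Lp ℝ 2 ρ) : E → ℝ) x = c ν * (b ν : E → ℝ) x := by
        rw [ae_all_iff]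
        intro ν
        filter_upwards [Lp.coeFn_smul (c ν) (b ν)] with x hx
        simpa using hx
      filter_upwards [h1, h2, h3] with x hx1 hx2 hx3
      rw [hx1]
      exact Finset.sum_congr rfl fun ν _ => by rw [hx3 ν, hx2 ν]
    have hfg : f =ᵐ[ρ] g := by
      filter_upwards [hae, hcoe] with x hx hxc
      have h1 : Filter.Tendsto (fun i => ∑ ν ∈ Finset.range (ns i), c ν * e ν x)
          Filter.atTop (nhds (g x)) := by
        refine hx.congr fun i => ?_
        exact hxc (ns i)
      have h2 : Filter.Tendsto (fun i => ∑ ν ∈ Finset.range (ns i), c ν * e ν x)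
          Filter.atTop (nhds (f x)) :=
        (hcpt x).tendsto_sum_nat.comp hns.tendsto_atTop
      exact tendsto_nhds_unique h2 h1
    -- compute the integral of g via inner product with the constant 1
    have hgi : Integrable (g : E → ℝ) ρ := (Lp.memLp g).integrable (by norm_num)
    have hrepr : b.repr g νstar = 0 := by
      rw [hg, LinearIsometryEquiv.apply_symm_apply]
      exact hc0
    have hinner : (inner ℝ (b νstar) g : ℝ) = ∫ x, g x ∂ρ := by
      rw [L2.inner_def]
      refine integral_congr_ae ?_
      filter_upwards [hb νstar] with x hx
      rw [RCLike.inner_apply, hx, hstar]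
      simp
    have hgint : ∫ x, g x ∂ρ = 0 := by
      rw [← hinner, ← HilbertBasis.repr_apply_apply, hrepr]
    rw [integral_congr_ae hfg, hgint]
  refine ⟨key, ?_⟩
  rintro f hf ⟨a, ha⟩ x
  have h0 := key f hf
  have : ∫ x, f x ∂ρ = a := by
    simp only [ha]
    simp
  rw [ha x, ← this, h0]
end

section
/- Let k_j* be reproducing kernels on ℝ×ℝ with k_j*(x,x) ≥ 0, and suppose for x, y ∈ ℝ^ℕ that Σ_j k_j*(x_j,x_j) < ∞ and Σ_j k_j*(y_j,y_j) < ∞. Then the sum over all finite subsets u of ℕ of Π_{j∈u} |k_j*(x_j,y_j)| is finite, bounded by (Π_j (1+k_j*(x_j,x_j)))^{1/2} (Π_j (1+k_j*(y_j,y_j)))^{1/2}. -/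
set_option maxHeartbeats 800000

open Real Finset

/-- sqrt of a finite product of nonnegative reals -/
lemma sqrt_finset_prod {ι : Type*} (s : Finset ι) (f : ι → ℝ) (hf : ∀ i, 0 ≤ f i) :
    Real.sqrt (∏ i ∈ s, f i) = ∏ i ∈ s, Real.sqrt (f i) := by
  classical
  induction s using Finset.cons_induction with
  | empty => simp
  | cons a s ha ih =>
    rw [Finset.prod_cons, Finset.prod_cons, Real.sqrt_mul (hf a), ih]

lemma one_add_sqrt_mul_le (b c : ℝ) (hb : 0 ≤ b) (hc : 0 ≤ c) :
    1 + Real.sqrt b * Real.sqrt c ≤ Real.sqrt ((1 + b) * (1 + c)) := by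
  rw [show (1:ℝ) + Real.sqrt b * Real.sqrt c
      = Real.sqrt ((1 + Real.sqrt b * Real.sqrt c) ^ 2) from
      (Real.sqrt_sq (by positivity)).symm]
  apply Real.sqrt_le_sqrt
  have h1 : Real.sqrt b * Real.sqrt b = b := Real.mul_self_sqrt hb
  have h2 : Real.sqrt c * Real.sqrt c = c := Real.mul_self_sqrt hc
  have h3 : 2 * (Real.sqrt b * Real.sqrt c) ≤ b + c := by
    nlinarith [sq_nonneg (Real.sqrt b - Real.sqrt c)]
  nlinarith [Real.sqrt_nonneg b, Real.sqrt_nonneg c]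

/-- For nonnegative summable g, finite products of (1+g) are bounded by the tprod. -/
lemma prod_one_add_le_tprod (g : ℕ → ℝ) (hg : ∀ j, 0 ≤ g j) (hs : Summable g)
    (T : Finset ℕ) : ∏ j ∈ T, (1 + g j) ≤ ∏' j, (1 + g j) := by
  have hpos : ∀ j, (0:ℝ) < 1 + g j := fun j => by linarith [hg j]
  have hlog : Summable fun j => Real.log (1 + g j) := by
    apply Summable.of_nonneg_of_le (fun j => Real.log_nonneg (by linarith [hg j]))
      (fun j => ?_) hs
    have := Real.log_le_sub_one_of_pos (hpos j)
    linarith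
  have heq : (Real.exp ∘ fun j => Real.log (1 + g j)) = fun j => 1 + g j :=
    funext fun j => Real.exp_log (hpos j)
  have hprod : HasProd (fun j => 1 + g j) (Real.exp (∑' j, Real.log (1 + g j))) :=
    heq ▸ hlog.hasSum.rexp
  rw [hprod.tprod_eq]
  have : ∏ j ∈ T, (1 + g j) = Real.exp (∑ j ∈ T, Real.log (1 + g j)) := by
    rw [Real.exp_sum]
    exact (Finset.prod_congr rfl fun j _ => (Real.exp_log (hpos j)).symm)
  rw [this]
  exact Real.exp_le_exp.2 (Summable.sum_le_tsum T (fun j _ => Real.log_nonneg (by linarith [hg j])) hlog)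

theorem summable_prod_over_finsets
    (k : ℕ → ℝ → ℝ → ℝ)
    (hsym : ∀ j x y, k j x y = k j y x)
    (hpsd : ∀ (j : ℕ) (n : ℕ) (pts : Fin n → ℝ) (a : Fin n → ℝ),
      0 ≤ ∑ i, ∑ l, a i * a l * k j (pts i) (pts l))
    (hnonneg : ∀ j x, 0 ≤ k j x x)
    (x y : ℕ → ℝ)
    (hx : Summable fun j => k j (x j) (x j))
    (hy : Summable fun j => k j (y j) (y j)) :
    (Summable fun u : Finset ℕ => ∏ j ∈ u, |k j (x j) (y j)|) ∧
      ∑' u : Finset ℕ, ∏ j ∈ u, |k j (x j) (y j)| ≤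
        Real.sqrt (∏' j, (1 + k j (x j) (x j))) *
          Real.sqrt (∏' j, (1 + k j (y j) (y j))) := by
  classical
  set b : ℕ → ℝ := fun j => k j (x j) (x j) with hbdef
  set c : ℕ → ℝ := fun j => k j (y j) (y j) with hcdef
  have hb : ∀ j, 0 ≤ b j := fun j => hnonneg j (x j)
  have hc : ∀ j, 0 ≤ c j := fun j => hnonneg j (y j)
  -- Cauchy–Schwarz: |k j (x j) (y j)| ≤ √(b j) * √(c j)
  have hcs : ∀ j, |k j (x j) (y j)| ≤ Real.sqrt (b j) * Real.sqrt (c j) := by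
    intro j
    have hquad : ∀ t : ℝ, 0 ≤ c j * (t * t) + (2 * k j (x j) (y j)) * t + b j := by
      intro t
      have := hpsd j 2 ![x j, y j] ![1, t]
      simp [Fin.sum_univ_two, Matrix.cons_val_zero, Matrix.cons_val_one] at this
      have hs := hsym j (y j) (x j)
      rw [hs] at this
      nlinarith [this]
    have hd := discrim_le_zero hquad
    rw [discrim] at hd
    have hsq : (k j (x j) (y j)) ^ 2 ≤ b j * c j := by nlinarith
    calc |k j (x j) (y j)| = Real.sqrt ((k j (x j) (y j)) ^ 2) := (Real.sqrt_sq_eq_abs _).symm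
      _ ≤ Real.sqrt (b j * c j) := Real.sqrt_le_sqrt hsq
      _ = Real.sqrt (b j) * Real.sqrt (c j) := Real.sqrt_mul (hb j) _
  -- multipliability of ∏ (1 + b j), ∏ (1 + c j)
  have hmult : ∀ (f : ℕ → ℝ), (∀ j, 0 ≤ f j) → Summable f →
      Multipliable (fun j => 1 + f j) := by
    intro f hf hsum
    have hpos : ∀ j, (0:ℝ) < 1 + f j := fun j => by linarith [hf j]
    have hlog : Summable fun j => Real.log (1 + f j) := by
      apply Summable.of_nonneg_of_le (fun j => Real.log_nonneg (by linarith [hf j]))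
        (fun j => ?_) hsum
      have := Real.log_le_sub_one_of_pos (hpos j)
      linarith
    have := Real.multipliable_of_summable_log hpos hlog
    exact this
  have hmb : Multipliable (fun j => 1 + b j) := hmult b hb hx
  have hmc : Multipliable (fun j => 1 + c j) := hmult c hc hy
  -- the bound constant
  set C : ℝ := Real.sqrt (∏' j, (1 + b j)) * Real.sqrt (∏' j, (1 + c j)) with hCdef
  -- key finite bound
  have hkey : ∀ S : Finset (Finset ℕ), ∑ u ∈ S, ∏ j ∈ u, |k j (x j) (y j)| ≤ C := by
    intro S
    set T : Finset ℕ := S.sup id with hTdef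
    have hsub : S ⊆ T.powerset := by
      intro u hu
      rw [Finset.mem_powerset]
      exact Finset.le_sup (f := id) hu
    have h1 : ∑ u ∈ S, ∏ j ∈ u, |k j (x j) (y j)|
        ≤ ∑ u ∈ T.powerset, ∏ j ∈ u, |k j (x j) (y j)| := by
      apply Finset.sum_le_sum_of_subset_of_nonneg hsub
      intro u _ _
      exact Finset.prod_nonneg fun j _ => abs_nonneg _
    have h2 : ∑ u ∈ T.powerset, ∏ j ∈ u, |k j (x j) (y j)|
        = ∏ j ∈ T, (1 + |k j (x j) (y j)|) := by
      have : ∏ j ∈ T, (1 + |k j (x j) (y j)|)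
          = ∏ j ∈ T, (|k j (x j) (y j)| + 1) := by
        exact Finset.prod_congr rfl fun j _ => add_comm _ _
      rw [this, Finset.prod_add]
      apply Finset.sum_congr rfl
      intro u hu
      simp
    have h3 : ∏ j ∈ T, (1 + |k j (x j) (y j)|)
        ≤ ∏ j ∈ T, Real.sqrt ((1 + b j) * (1 + c j)) := by
      apply Finset.prod_le_prod
      · intro j _; have := abs_nonneg (k j (x j) (y j)); linarith
      · intro j _
        calc 1 + |k j (x j) (y j)| ≤ 1 + Real.sqrt (b j) * Real.sqrt (c j) := by
              linarith [hcs j]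
          _ ≤ Real.sqrt ((1 + b j) * (1 + c j)) := one_add_sqrt_mul_le _ _ (hb j) (hc j)
    have hnb : ∀ j, (0:ℝ) ≤ 1 + b j := fun j => by linarith [hb j]
    have hnc : ∀ j, (0:ℝ) ≤ 1 + c j := fun j => by linarith [hc j]
    have h4 : ∏ j ∈ T, Real.sqrt ((1 + b j) * (1 + c j))
        = Real.sqrt (∏ j ∈ T, (1 + b j)) * Real.sqrt (∏ j ∈ T, (1 + c j)) := by
      rw [sqrt_finset_prod T (fun j => 1 + b j) hnb,
        sqrt_finset_prod T (fun j => 1 + c j) hnc, ← Finset.prod_mul_distrib]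
      exact Finset.prod_congr rfl fun j _ => Real.sqrt_mul (hnb j) _
    have h5 : Real.sqrt (∏ j ∈ T, (1 + b j)) * Real.sqrt (∏ j ∈ T, (1 + c j)) ≤ C := by
      exact mul_le_mul
        (Real.sqrt_le_sqrt (prod_one_add_le_tprod b hb hx T))
        (Real.sqrt_le_sqrt (prod_one_add_le_tprod c hc hy T))
        (Real.sqrt_nonneg _) (Real.sqrt_nonneg _)
    linarith
  have hsumm : Summable fun u : Finset ℕ => ∏ j ∈ u, |k j (x j) (y j)| :=
    summable_of_sum_le (fun u => Finset.prod_nonneg fun j _ => abs_nonneg _) hkey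
  exact ⟨hsumm, Summable.tsum_le_of_sum_le hsumm hkey⟩
end

section
/- Suppose the Fourier weights satisfy the exponential growth condition α_{ν,j} = 2^{r_j ν} for ν ≥ 1 with r_j > 0 and Σ_j 2^{-r_j} < ∞, together with Σ_j |α_{0,j} − 1| < ∞. Then the maximal domain 𝒳 = { x ∈ ℝ^ℕ : Σ_j k_j*(x_j,x_j) < ∞ } of the tensor product Hermite kernel equals the weighted ℓ² space { x ∈ ℝ^ℕ : Σ_j 2^{-r_j} x_j² < ∞ }. -/
open Nat Finset

/-- The `L²(μ₀)`-normalized Hermite polynomial, given by its explicit representation. -/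
noncomputable def hermiteNormalized (ν : ℕ) (x : ℝ) : ℝ :=
  Real.sqrt (ν !) * ∑ k ∈ Finset.range (ν / 2 + 1),
    (-1 : ℝ) ^ k * x ^ (ν - 2 * k) / ((2 : ℝ) ^ k * (k ! : ℝ) * ((ν - 2 * k)! : ℝ))

noncomputable def hermiteS (n : ℕ) (x : ℝ) : ℝ :=
  ∑ k ∈ Finset.range (n / 2 + 1),
    (-1 : ℝ) ^ k * x ^ (n - 2 * k) / ((2 : ℝ) ^ k * (k ! : ℝ) * ((n - 2 * k)! : ℝ))

lemma hermiteNormalized_eq (n : ℕ) (x : ℝ) :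
    hermiteNormalized n x = Real.sqrt (n !) * hermiteS n x := rfl

lemma hermiteNormalized_zero (x : ℝ) : hermiteNormalized 0 x = 1 := by
  simp [hermiteNormalized]

lemma hermiteNormalized_one (x : ℝ) : hermiteNormalized 1 x = x := by
  simp [hermiteNormalized, Finset.sum_range_one]

lemma hermiteS_rec (n : ℕ) (x : ℝ) :
    ((n : ℝ) + 2) * hermiteS (n + 2) x = x * hermiteS (n + 1) x - hermiteS n x := by
  have hfac : ∀ a : ℕ, ((a ! : ℝ)) ≠ 0 := fun a =>
    Nat.cast_ne_zero.mpr (Nat.factorial_ne_zero a)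
  rcases Nat.even_or_odd n with ⟨m, rfl⟩ | ⟨m, rfl⟩
  · -- n = m + m
    have hm : m + m = 2 * m := by ring
    rw [hm]
    simp only [hermiteS]
    rw [show (2*m+2)/2+1 = (m+1)+1 from by omega, show (2*m+1)/2+1 = m+1 from by omega,
      show (2*m)/2+1 = m+1 from by omega]
    rw [Finset.sum_range_succ' (fun k => (-1 : ℝ) ^ k * x ^ (2*m+2 - 2 * k) / ((2 : ℝ) ^ k * (k ! : ℝ) * ((2*m+2 - 2 * k)! : ℝ))) (m+1)]
    rw [Finset.sum_range_succ (fun k => (-1 : ℝ) ^ (k+1) * x ^ (2*m+2 - 2 * (k+1)) / ((2 : ℝ) ^ (k+1) * ((k+1) ! : ℝ) * ((2*m+2 - 2 * (k+1))! : ℝ))) m]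
    rw [Finset.sum_range_succ' (fun k => (-1 : ℝ) ^ k * x ^ (2*m+1 - 2 * k) / ((2 : ℝ) ^ k * (k ! : ℝ) * ((2*m+1 - 2 * k)! : ℝ))) m]
    rw [Finset.sum_range_succ (fun k => (-1 : ℝ) ^ k * x ^ (2*m - 2 * k) / ((2 : ℝ) ^ k * (k ! : ℝ) * ((2*m - 2 * k)! : ℝ))) m]
    push_cast
    have key : ∀ k ∈ Finset.range m,
        (2*(m:ℝ)+2) * ((-1 : ℝ) ^ (k+1) * x ^ (2*m+2 - 2 * (k+1)) / ((2 : ℝ) ^ (k+1) * ((k+1) ! : ℝ) * ((2*m+2 - 2 * (k+1))! : ℝ))) =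
          x * ((-1 : ℝ) ^ (k+1) * x ^ (2*m+1 - 2 * (k+1)) / ((2 : ℝ) ^ (k+1) * ((k+1) ! : ℝ) * ((2*m+1 - 2 * (k+1))! : ℝ))) -
            (-1 : ℝ) ^ k * x ^ (2*m - 2 * k) / ((2 : ℝ) ^ k * (k ! : ℝ) * ((2*m - 2 * k)! : ℝ)) := by
      intro k hk
      rw [Finset.mem_range] at hk
      obtain ⟨j, rfl⟩ : ∃ j, m = k + j + 1 := ⟨m - k - 1, by omega⟩
      rw [show 2*(k+j+1)+2-2*(k+1) = (2*j+1)+1 from by omega,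
        show 2*(k+j+1)+1-2*(k+1) = 2*j+1 from by omega,
        show 2*(k+j+1)-2*k = (2*j+1)+1 from by omega]
      rw [Nat.factorial_succ (2*j+1), Nat.factorial_succ k, pow_succ x (2*j+1),
        pow_succ (-1:ℝ) k, pow_succ (2:ℝ) k]
      push_cast
      field_simp
      ring
    have e0 : (2*(m:ℝ)+2) * ((-1 : ℝ) ^ 0 * x ^ (2*m+2) / ((2 : ℝ) ^ 0 * ((0:ℕ) ! : ℝ) * ((2*m+2)! : ℝ))) =
        x * ((-1 : ℝ) ^ 0 * x ^ (2*m+1) / ((2 : ℝ) ^ 0 * ((0:ℕ) ! : ℝ) * ((2*m+1)! : ℝ))) := by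
      rw [show 2*m+2 = (2*m+1)+1 from by omega]
      rw [Nat.factorial_succ (2*m+1), pow_succ x (2*m+1)]
      push_cast
      field_simp
      ring
    have e2 : (2*(m:ℝ)+2) * ((-1 : ℝ) ^ (m+1) * x ^ (2*m+2 - 2 * (m+1)) / ((2 : ℝ) ^ (m+1) * ((m+1) ! : ℝ) * ((2*m+2 - 2 * (m+1))! : ℝ))) =
        -((-1 : ℝ) ^ m * x ^ (2*m - 2 * m) / ((2 : ℝ) ^ m * (m ! : ℝ) * ((2*m - 2 * m)! : ℝ))) := by
      rw [show 2*m+2-2*(m+1) = 0 from by omega, show 2*m - 2*m = 0 from by omega]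
      rw [Nat.factorial_succ m, pow_succ (-1:ℝ) m, pow_succ (2:ℝ) m]
      push_cast
      field_simp
    rw [mul_add, mul_add, Finset.mul_sum, Finset.sum_congr rfl key, Finset.sum_sub_distrib,
      ← Finset.mul_sum]
    linear_combination e0 + e2
  · simp only [hermiteS]
    rw [show (2*m+1+2)/2+1 = (m+1)+1 from by omega, show (2*m+1+1)/2+1 = (m+1)+1 from by omega,
      show (2*m+1)/2+1 = m+1 from by omega]
    rw [Finset.sum_range_succ' (fun k => (-1 : ℝ) ^ k * x ^ (2*m+1+2 - 2 * k) / ((2 : ℝ) ^ k * (k ! : ℝ) * ((2*m+1+2 - 2 * k)! : ℝ))) (m+1)]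
    rw [Finset.sum_range_succ' (fun k => (-1 : ℝ) ^ k * x ^ (2*m+1+1 - 2 * k) / ((2 : ℝ) ^ k * (k ! : ℝ) * ((2*m+1+1 - 2 * k)! : ℝ))) (m+1)]
    push_cast
    have key : ∀ k ∈ Finset.range (m+1),
        (2*(m:ℝ)+1+2) * ((-1 : ℝ) ^ (k+1) * x ^ (2*m+1+2 - 2 * (k+1)) / ((2 : ℝ) ^ (k+1) * ((k+1) ! : ℝ) * ((2*m+1+2 - 2 * (k+1))! : ℝ))) =
          x * ((-1 : ℝ) ^ (k+1) * x ^ (2*m+1+1 - 2 * (k+1)) / ((2 : ℝ) ^ (k+1) * ((k+1) ! : ℝ) * ((2*m+1+1 - 2 * (k+1))! : ℝ))) -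
            (-1 : ℝ) ^ k * x ^ (2*m+1 - 2 * k) / ((2 : ℝ) ^ k * (k ! : ℝ) * ((2*m+1 - 2 * k)! : ℝ)) := by
      intro k hk
      rw [Finset.mem_range] at hk
      obtain ⟨j, rfl⟩ : ∃ j, m = k + j := ⟨m - k, by omega⟩
      rw [show 2*(k+j)+1+2-2*(k+1) = (2*j)+1 from by omega,
        show 2*(k+j)+1+1-2*(k+1) = 2*j from by omega,
        show 2*(k+j)+1-2*k = (2*j)+1 from by omega]
      rw [Nat.factorial_succ (2*j), Nat.factorial_succ k, pow_succ x (2*j),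
        pow_succ (-1:ℝ) k, pow_succ (2:ℝ) k]
      push_cast
      field_simp
      ring
    have e0 : (2*(m:ℝ)+1+2) * ((-1 : ℝ) ^ 0 * x ^ (2*m+3) / ((2 : ℝ) ^ 0 * ((0:ℕ) ! : ℝ) * ((2*m+3)! : ℝ))) =
        x * ((-1 : ℝ) ^ 0 * x ^ (2*m+2) / ((2 : ℝ) ^ 0 * ((0:ℕ) ! : ℝ) * ((2*m+2)! : ℝ))) := by
      rw [show 2*m+3 = (2*m+2)+1 from by omega]
      rw [Nat.factorial_succ (2*m+2), pow_succ x (2*m+2)]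
      push_cast
      field_simp
      ring
    rw [mul_add, Finset.mul_sum, Finset.sum_congr rfl key, Finset.sum_sub_distrib,
      ← Finset.mul_sum]
    linear_combination e0

lemma hermiteNormalized_rec (n : ℕ) (x : ℝ) :
    Real.sqrt ((n : ℝ) + 2) * hermiteNormalized (n + 2) x
      = x * hermiteNormalized (n + 1) x - Real.sqrt ((n : ℝ) + 1) * hermiteNormalized n x := by
  have h2 : (((n + 2)! : ℕ) : ℝ) = ((n : ℝ) + 2) * (((n + 1)! : ℕ) : ℝ) := by
    rw [Nat.factorial_succ]; push_cast; ring
  have h1 : (((n + 1)! : ℕ) : ℝ) = ((n : ℝ) + 1) * ((n ! : ℕ) : ℝ) := by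
    rw [Nat.factorial_succ]; push_cast; ring
  have s2 : Real.sqrt (((n + 2)! : ℕ)) = Real.sqrt ((n : ℝ) + 2) * Real.sqrt (((n + 1)! : ℕ)) := by
    rw [h2, Real.sqrt_mul (by positivity)]
  have s1 : Real.sqrt (((n + 1)! : ℕ)) = Real.sqrt ((n : ℝ) + 1) * Real.sqrt ((n ! : ℕ)) := by
    rw [h1, Real.sqrt_mul (by positivity)]
  have sq2 : Real.sqrt ((n : ℝ) + 2) * Real.sqrt ((n : ℝ) + 2) = (n : ℝ) + 2 :=
    Real.mul_self_sqrt (by positivity)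
  simp only [hermiteNormalized_eq]
  rw [s2, s1]
  linear_combination (Real.sqrt ((n : ℝ) + 1) * Real.sqrt ((n ! : ℕ))) * hermiteS_rec n x +
    (Real.sqrt ((n : ℝ) + 1) * Real.sqrt ((n ! : ℕ)) * hermiteS (n + 2) x) * sq2

lemma hermiteNormalized_growth (x : ℝ) (n : ℕ) :
    max |hermiteNormalized n x| |hermiteNormalized (n + 1) x|
      ≤ max 1 |x| * ∏ k ∈ Finset.range n, (1 + |x| / Real.sqrt ((k : ℝ) + 2)) := by
  induction n with
  | zero =>
    simp [hermiteNormalized_zero, hermiteNormalized_one]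
  | succ n ih =>
    have hc : ∀ k : ℕ, (1 : ℝ) ≤ 1 + |x| / Real.sqrt ((k : ℝ) + 2) := fun k => by
      have : (0 : ℝ) ≤ |x| / Real.sqrt ((k : ℝ) + 2) := by positivity
      linarith
    have hP1 : (1 : ℝ) ≤ ∏ k ∈ Finset.range n, (1 + |x| / Real.sqrt ((k : ℝ) + 2)) := by
      calc (1 : ℝ) = ∏ _k ∈ Finset.range n, (1 : ℝ) := by simp
        _ ≤ ∏ k ∈ Finset.range n, (1 + |x| / Real.sqrt ((k : ℝ) + 2)) :=
            Finset.prod_le_prod (fun k _ => by norm_num) fun k _ => hc k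
    have hM1 : (1 : ℝ) ≤ max 1 |x| := le_max_left _ _
    have hD0 : (0 : ℝ) ≤ max |hermiteNormalized n x| |hermiteNormalized (n + 1) x| :=
      le_trans (abs_nonneg _) (le_max_left _ _)
    have hs2 : (0 : ℝ) < Real.sqrt ((n : ℝ) + 2) := Real.sqrt_pos.mpr (by positivity)
    have hsle : Real.sqrt ((n : ℝ) + 1) ≤ Real.sqrt ((n : ℝ) + 2) :=
      Real.sqrt_le_sqrt (by linarith)
    have hs1 : (0 : ℝ) ≤ Real.sqrt ((n : ℝ) + 1) := Real.sqrt_nonneg _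
    rw [Finset.prod_range_succ]
    set D := max |hermiteNormalized n x| |hermiteNormalized (n + 1) x| with hD
    set P := ∏ k ∈ Finset.range n, (1 + |x| / Real.sqrt ((k : ℝ) + 2)) with hPdef
    -- bound on the new term
    have key : |hermiteNormalized (n + 2) x| ≤ (1 + |x| / Real.sqrt ((n : ℝ) + 2)) * D := by
      have habs : Real.sqrt ((n : ℝ) + 2) * |hermiteNormalized (n + 2) x|
          ≤ |x| * |hermiteNormalized (n + 1) x|
            + Real.sqrt ((n : ℝ) + 1) * |hermiteNormalized n x| := by
        calc Real.sqrt ((n : ℝ) + 2) * |hermiteNormalized (n + 2) x|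
            = |Real.sqrt ((n : ℝ) + 2) * hermiteNormalized (n + 2) x| := by
              rw [abs_mul, abs_of_nonneg hs2.le]
          _ = |x * hermiteNormalized (n + 1) x
                - Real.sqrt ((n : ℝ) + 1) * hermiteNormalized n x| := by
              rw [hermiteNormalized_rec n x]
          _ ≤ |x * hermiteNormalized (n + 1) x|
                + |Real.sqrt ((n : ℝ) + 1) * hermiteNormalized n x| := abs_sub _ _
          _ = |x| * |hermiteNormalized (n + 1) x|
                + Real.sqrt ((n : ℝ) + 1) * |hermiteNormalized n x| := by
              rw [abs_mul, abs_mul, abs_of_nonneg hs1]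
      have hfac : Real.sqrt ((n : ℝ) + 2) * ((1 + |x| / Real.sqrt ((n : ℝ) + 2)) * D)
          = (Real.sqrt ((n : ℝ) + 2) + |x|) * D := by
        field_simp
      rw [← mul_le_mul_iff_of_pos_left hs2, hfac]
      have h1 : |hermiteNormalized n x| ≤ D := le_max_left _ _
      have h2 : |hermiteNormalized (n + 1) x| ≤ D := le_max_right _ _
      nlinarith [abs_nonneg x, abs_nonneg (hermiteNormalized n x),
        abs_nonneg (hermiteNormalized (n + 1) x)]
    have hMP0 : (0 : ℝ) ≤ max 1 |x| * P := by positivity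
    have hih : D ≤ max 1 |x| * P := ih
    apply max_le
    · calc |hermiteNormalized (n + 1) x| ≤ D := le_max_right _ _
        _ ≤ max 1 |x| * P := hih
        _ ≤ max 1 |x| * P * (1 + |x| / Real.sqrt ((n : ℝ) + 2)) :=
            le_mul_of_one_le_right hMP0 (hc n)
        _ = max 1 |x| * (P * (1 + |x| / Real.sqrt ((n : ℝ) + 2))) := by ring
    · calc |hermiteNormalized (n + 2) x| ≤ (1 + |x| / Real.sqrt ((n : ℝ) + 2)) * D := key
        _ ≤ (1 + |x| / Real.sqrt ((n : ℝ) + 2)) * (max 1 |x| * P) :=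
            mul_le_mul_of_nonneg_left hih (le_trans zero_le_one (hc n))
        _ = max 1 |x| * (P * (1 + |x| / Real.sqrt ((n : ℝ) + 2))) := by ring

lemma hermiteNormalized_le (x : ℝ) (n : ℕ) :
    |hermiteNormalized (n + 1) x| ≤ max 1 |x| * (2 * max 1 |x|) ^ n := by
  have h := hermiteNormalized_growth x n
  have h1 : |hermiteNormalized (n + 1) x| ≤ max 1 |x| *
      ∏ k ∈ Finset.range n, (1 + |x| / Real.sqrt ((k : ℝ) + 2)) :=
    le_trans (le_max_right _ _) h
  refine h1.trans ?_
  have hM1 : (1 : ℝ) ≤ max 1 |x| := le_max_left _ _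
  refine mul_le_mul_of_nonneg_left ?_ (by positivity)
  calc ∏ k ∈ Finset.range n, (1 + |x| / Real.sqrt ((k : ℝ) + 2))
      ≤ ∏ _k ∈ Finset.range n, (2 * max 1 |x|) := by
        refine Finset.prod_le_prod (fun k _ => by positivity) fun k _ => ?_
        have hs : (1 : ℝ) ≤ Real.sqrt ((k : ℝ) + 2) := by
          rw [show (1 : ℝ) = Real.sqrt 1 by rw [Real.sqrt_one]]
          refine Real.sqrt_le_sqrt ?_
          have : (0 : ℝ) ≤ (k : ℝ) := Nat.cast_nonneg k
          linarith
        have : |x| / Real.sqrt ((k : ℝ) + 2) ≤ |x| := by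
          rw [div_le_iff₀ (by linarith)]
          exact le_mul_of_one_le_right (abs_nonneg x) hs
        have hxM : |x| ≤ max 1 |x| := le_max_right _ _
        have : 1 + |x| / Real.sqrt ((k : ℝ) + 2) ≤ 1 + |x| := by linarith
        calc 1 + |x| / Real.sqrt ((k : ℝ) + 2) ≤ 1 + |x| := this
          _ ≤ max 1 |x| + max 1 |x| := add_le_add (le_max_left _ _) (le_max_right _ _)
          _ = 2 * max 1 |x| := by ring
      _ = (2 * max 1 |x|) ^ n := by rw [Finset.prod_const, Finset.card_range]

lemma rpow_aux (s : ℝ) (ν : ℕ) :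
    (2 : ℝ) ^ (-(s * ((ν : ℝ) + 1))) = ((2 : ℝ) ^ (-s)) ^ (ν + 1) := by
  rw [← Real.rpow_natCast ((2 : ℝ) ^ (-s)) (ν + 1), ← Real.rpow_mul (by norm_num : (0:ℝ) ≤ 2)]
  congr 1
  push_cast
  ring

lemma summable_fiber (s : ℝ) (hs : 0 < s) (x : ℝ) :
    Summable fun ν : ℕ =>
      (2 : ℝ) ^ (-(s * ((ν : ℝ) + 1))) * (hermiteNormalized (ν + 1) x) ^ 2 := by
  set w : ℝ := (2 : ℝ) ^ (-s) with hwdef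
  have hw0 : 0 < w := Real.rpow_pos_of_pos (by norm_num) _
  have hw1 : w < 1 := Real.rpow_lt_one_of_one_lt_of_neg (by norm_num) (by linarith)
  set c : ℕ → ℝ := fun ν => 1 + |x| / Real.sqrt ((ν : ℝ) + 2) with hcdef
  set F : ℕ → ℝ := fun ν =>
    w ^ (ν + 1) * (max 1 |x| * ∏ k ∈ Finset.range ν, c k) ^ 2 with hFdef
  have hc1 : ∀ ν : ℕ, (1 : ℝ) ≤ c ν := fun ν => by
    have : (0 : ℝ) ≤ |x| / Real.sqrt ((ν : ℝ) + 2) := by positivity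
    simp only [hcdef]; linarith
  have hFnonneg : ∀ ν, 0 ≤ F ν := fun ν => by
    have h0 : (0:ℝ) < w := hw0
    positivity
  have hF : Summable F := by
    apply summable_of_ratio_norm_eventually_le (r := (1 + w) / 2) (by linarith)
    set δ : ℝ := (1 - w) / 8 with hδdef
    have hδ0 : 0 < δ := by simp only [hδdef]; linarith
    have hδ1 : δ ≤ 1 := by simp only [hδdef]; linarith
    filter_upwards [Filter.eventually_ge_atTop ⌈(|x| / δ) ^ 2⌉₊] with ν hν
    have hsν : (0 : ℝ) < Real.sqrt ((ν : ℝ) + 2) := Real.sqrt_pos.mpr (by positivity)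
    have hxd : |x| / Real.sqrt ((ν : ℝ) + 2) ≤ δ := by
      have h1 : (|x| / δ) ^ 2 ≤ (ν : ℝ) + 2 := by
        have ha : (|x| / δ) ^ 2 ≤ (⌈(|x| / δ) ^ 2⌉₊ : ℝ) := Nat.le_ceil _
        have hb : ((⌈(|x| / δ) ^ 2⌉₊ : ℕ) : ℝ) ≤ (ν : ℝ) := Nat.cast_le.mpr hν
        linarith
      have h2 : |x| / δ ≤ Real.sqrt ((ν : ℝ) + 2) :=
        (Real.le_sqrt (by positivity) (by positivity)).mpr h1
      rw [div_le_iff₀ hsν]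
      calc |x| = |x| / δ * δ := by field_simp
        _ ≤ Real.sqrt ((ν : ℝ) + 2) * δ := mul_le_mul_of_nonneg_right h2 hδ0.le
        _ = δ * Real.sqrt ((ν : ℝ) + 2) := mul_comm _ _
    have hcν : c ν ≤ 1 + δ := by
      simp only [hcdef]; linarith
    rw [Real.norm_eq_abs, Real.norm_eq_abs, abs_of_nonneg (hFnonneg _),
      abs_of_nonneg (hFnonneg _)]
    have hFrec : F (ν + 1) = w * c ν ^ 2 * F ν := by
      simp only [hFdef]
      rw [Finset.prod_range_succ]
      ring
    rw [hFrec]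
    have hc2 : w * c ν ^ 2 ≤ (1 + w) / 2 := by
      have h1 : c ν ^ 2 ≤ (1 + δ) ^ 2 :=
        pow_le_pow_left₀ (by linarith [hc1 ν]) hcν 2
      have h2 : w * c ν ^ 2 ≤ w * (1 + δ) ^ 2 := mul_le_mul_of_nonneg_left h1 hw0.le
      have hkey : w * (1 + (1 - w) / 8) ^ 2 ≤ (1 + w) / 2 := by
        nlinarith [mul_nonneg (sub_nonneg.mpr hw1.le) (sq_nonneg w), sq_nonneg (1 - w),
          sub_nonneg.mpr hw1.le]
      calc w * c ν ^ 2 ≤ w * (1 + δ) ^ 2 := h2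
        _ = w * (1 + (1 - w) / 8) ^ 2 := by rw [hδdef]
        _ ≤ (1 + w) / 2 := hkey
    exact mul_le_mul_of_nonneg_right hc2 (hFnonneg ν)
  apply hF.of_nonneg_of_le
  · intro ν
    have h2 : (0 : ℝ) < (2 : ℝ) ^ (-(s * ((ν : ℝ) + 1))) := Real.rpow_pos_of_pos (by norm_num) _
    positivity
  · intro ν
    rw [rpow_aux s ν]
    have hg : |hermiteNormalized (ν + 1) x| ≤
        max 1 |x| * ∏ k ∈ Finset.range ν, c k :=
      le_trans (le_max_right _ _) (hermiteNormalized_growth x ν)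
    have hsq : (hermiteNormalized (ν + 1) x) ^ 2 ≤
        (max 1 |x| * ∏ k ∈ Finset.range ν, c k) ^ 2 := by
      rw [← sq_abs]
      exact pow_le_pow_left₀ (abs_nonneg _) hg 2
    exact mul_le_mul_of_nonneg_left hsq (pow_nonneg hw0.le _)

lemma fiber_tsum_le (s : ℝ) (hs : 0 < s) (x : ℝ)
    (hq : (2 : ℝ) ^ (-s) * (4 * (max 1 |x|) ^ 2) ≤ 1 / 2) :
    ∑' ν : ℕ, (2 : ℝ) ^ (-(s * ((ν : ℝ) + 1))) * (hermiteNormalized (ν + 1) x) ^ 2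
      ≤ 2 * ((2 : ℝ) ^ (-s) * (max 1 |x|) ^ 2) := by
  set w : ℝ := (2 : ℝ) ^ (-s) with hwdef
  have hw0 : 0 < w := Real.rpow_pos_of_pos (by norm_num) _
  set M : ℝ := max 1 |x| with hMdef
  have hM1 : (1 : ℝ) ≤ M := le_max_left _ _
  set q : ℝ := w * (4 * M ^ 2) with hqdef
  have hq0 : 0 ≤ q := by positivity
  have hq1 : q < 1 := lt_of_le_of_lt hq (by norm_num)
  have hterm : ∀ ν : ℕ,
      (2 : ℝ) ^ (-(s * ((ν : ℝ) + 1))) * (hermiteNormalized (ν + 1) x) ^ 2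
        ≤ w * M ^ 2 * q ^ ν := by
    intro ν
    rw [rpow_aux s ν]
    have hb := hermiteNormalized_le x ν
    have hsq : (hermiteNormalized (ν + 1) x) ^ 2 ≤ (M * (2 * M) ^ ν) ^ 2 := by
      rw [← sq_abs]
      exact pow_le_pow_left₀ (abs_nonneg _) hb 2
    calc w ^ (ν + 1) * (hermiteNormalized (ν + 1) x) ^ 2
        ≤ w ^ (ν + 1) * (M * (2 * M) ^ ν) ^ 2 :=
          mul_le_mul_of_nonneg_left hsq (pow_nonneg hw0.le _)
      _ = w * M ^ 2 * q ^ ν := by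
          have e2 : ((2 * M) ^ ν) ^ 2 = ((2 * M) ^ 2) ^ ν := by
            rw [← pow_mul, ← pow_mul, Nat.mul_comm]
          rw [hqdef, show (4 : ℝ) * M ^ 2 = (2 * M) ^ 2 from by ring, mul_pow w, ← e2]
          ring
  calc ∑' ν : ℕ, (2 : ℝ) ^ (-(s * ((ν : ℝ) + 1))) * (hermiteNormalized (ν + 1) x) ^ 2
      ≤ ∑' ν : ℕ, w * M ^ 2 * q ^ ν :=
        Summable.tsum_le_tsum hterm (summable_fiber s hs x)
          ((summable_geometric_of_lt_one hq0 hq1).mul_left _)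
    _ = w * M ^ 2 * (1 - q)⁻¹ := by
        rw [tsum_mul_left, tsum_geometric_of_lt_one hq0 hq1]
    _ ≤ 2 * (w * M ^ 2) := by
        have hinv : (1 - q)⁻¹ ≤ 2 := by
          rw [inv_le_comm₀ (by linarith) (by norm_num)]
          linarith
        nlinarith [mul_nonneg hw0.le (sq_nonneg M)]

/-- In the exponential-growth case `α_{ν,j} = 2^{r_j ν}` (ν ≥ 1), the maximal domain of the
tensor product Hermite kernel, `𝒳 = {x : Σ_j k_j*(x_j,x_j) < ∞}` with
`k_j*(x,x) = Σ_{ν≥1} α_{ν,j}⁻¹ h_ν(x)²`, equals the weighted ℓ² space. -/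
theorem maximal_domain_exponential_growth
    (r : ℕ → ℝ) (hr : ∀ j, 0 < r j)
    (hsum : Summable fun j => (2 : ℝ) ^ (-r j)) :
    {x : ℕ → ℝ | Summable fun p : ℕ × ℕ =>
        (2 : ℝ) ^ (-(r p.2 * ((p.1 : ℝ) + 1))) * (hermiteNormalized (p.1 + 1) (x p.2)) ^ 2} =
      {x : ℕ → ℝ | Summable fun j => (2 : ℝ) ^ (-r j) * (x j) ^ 2} := by
  ext x
  simp only [Set.mem_setOf_eq]
  constructor
  · intro hx
    have h1 : Summable ((fun p : ℕ × ℕ =>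
        (2 : ℝ) ^ (-(r p.2 * ((p.1 : ℝ) + 1))) * (hermiteNormalized (p.1 + 1) (x p.2)) ^ 2) ∘
          fun j : ℕ => ((0 : ℕ), j)) :=
      hx.comp_injective fun a b h => (Prod.ext_iff.1 h).2
    refine h1.congr fun j => ?_
    show (2 : ℝ) ^ (-(r j * (((0 : ℕ) : ℝ) + 1))) * (hermiteNormalized (0 + 1) (x j)) ^ 2
      = (2 : ℝ) ^ (-r j) * (x j) ^ 2
    rw [show (0 + 1 : ℕ) = 1 from rfl, hermiteNormalized_one]
    norm_num
  · intro hx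
    have hb : Summable fun j => (2 : ℝ) ^ (-r j) + (2 : ℝ) ^ (-r j) * (x j) ^ 2 :=
      hsum.add hx
    rw [← (Equiv.prodComm ℕ ℕ).summable_iff]
    have hco : ((fun p : ℕ × ℕ =>
        (2 : ℝ) ^ (-(r p.2 * ((p.1 : ℝ) + 1))) * (hermiteNormalized (p.1 + 1) (x p.2)) ^ 2) ∘
          ⇑(Equiv.prodComm ℕ ℕ)) = fun q : ℕ × ℕ =>
        (2 : ℝ) ^ (-(r q.1 * ((q.2 : ℝ) + 1))) * (hermiteNormalized (q.2 + 1) (x q.1)) ^ 2 := rfl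
    rw [hco]
    rw [summable_prod_of_nonneg (fun q => mul_nonneg
      (Real.rpow_pos_of_pos (by norm_num) _).le (sq_nonneg _))]
    constructor
    · intro j
      exact summable_fiber (r j) (hr j) (x j)
    · have hev : ∀ᶠ j in Filter.cofinite,
          (2 : ℝ) ^ (-r j) + (2 : ℝ) ^ (-r j) * (x j) ^ 2 < 1 / 8 :=
        hb.tendsto_cofinite_zero.eventually_lt_const (by norm_num)
      apply Summable.of_norm_bounded_eventually
        (g := fun j => 2 * ((2 : ℝ) ^ (-r j) + (2 : ℝ) ^ (-r j) * (x j) ^ 2)) (hb.mul_left 2)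
      filter_upwards [hev] with j hj
      have hw0 : (0 : ℝ) < (2 : ℝ) ^ (-r j) := Real.rpow_pos_of_pos (by norm_num) _
      have hM2 : (max 1 |x j|) ^ 2 ≤ 1 + (x j) ^ 2 := by
        rcases le_total 1 |x j| with h | h
        · rw [max_eq_right h, sq_abs]
          nlinarith
        · rw [max_eq_left h]
          nlinarith [sq_nonneg (x j)]
      have hq : (2 : ℝ) ^ (-r j) * (4 * (max 1 |x j|) ^ 2) ≤ 1 / 2 := by nlinarith
      have ht := fiber_tsum_le (r j) (hr j) (x j) hq
      rw [Real.norm_eq_abs, abs_of_nonneg (tsum_nonneg fun ν => mul_nonneg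
        (Real.rpow_pos_of_pos (by norm_num) _).le (sq_nonneg _))]
      refine ht.trans ?_
      nlinarith
end
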